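/- arXiv:2304.07516 — 3 statements merged into one kernel-verified Lean document; each statement's English description precedes it below -/
import Mathlib

section
/- Let q be a prime power, n ≥ 1, and set d = ⌈3·log n / log q + 3⌉. Then there exists a 4-term linearly independent set S ⊆ (F_q)^d with |S| = n. In particular, S is a linear Sidon set and |F_q^d| = q^d ≤ q^4 · n^3. -/
def kTermLI (F : Type*) [Field F] {d : ℕ} (t : ℕ) (S : Set (Fin d → F)) : Prop :=
  ∀ T : Finset (Fin d → F), (T : Set (Fin d → F)) ⊆ S → T.card ≤ t →
    LinearIndependent F (fun x : (T : Set (Fin d → F)) => (x : Fin d → F))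

def LinearSidon (F : Type*) [Field F] {d : ℕ} (S : Set (Fin d → F)) : Prop :=
  ∀ a b : F, a ≠ 0 → b ≠ 0 → ∀ x y x' y' : Fin d → F,
    x ∈ S → y ∈ S → x' ∈ S → y' ∈ S → x ≠ y → x' ≠ y' →
    a • x + b • y = a • x' + b • y' → ({x, y} : Set (Fin d → F)) = {x', y'}

lemma tuple_li {F : Type*} [Field F] {d : ℕ} {S : Set (Fin d → F)}
    (hS : kTermLI F 4 S) {k : ℕ} (hk : k ≤ 4) (v : Fin k → (Fin d → F))
    (hv : Function.Injective v) (hvS : ∀ i, v i ∈ S) :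
    LinearIndependent F v := by
  classical
  set T : Finset (Fin d → F) := Finset.image v Finset.univ with hT
  have hsub : (T : Set (Fin d → F)) ⊆ S := by
    intro x hx
    simp only [hT, Finset.coe_image, Finset.coe_univ, Set.image_univ, Set.mem_range] at hx
    obtain ⟨i, rfl⟩ := hx; exact hvS i
  have hcard : T.card ≤ 4 := le_trans (Finset.card_image_le.trans (by simp)) hk
  have hli := hS T hsub hcard
  have hvm : ∀ i, v i ∈ (T : Set (Fin d → F)) := by
    intro i; simp [hT]
  have heq : v = (fun x : (T : Set (Fin d → F)) => (x : Fin d → F)) ∘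
      (fun i => (⟨v i, hvm i⟩ : (T : Set (Fin d → F)))) := rfl
  rw [heq]
  exact hli.comp _ (fun i j hij => hv (by simpa using congrArg Subtype.val hij))

lemma kTermLI_insert {F : Type*} [Field F] {d : ℕ} {S : Finset (Fin d → F)}
    (hS : kTermLI F 4 (S : Set (Fin d → F))) {x : Fin d → F}
    (hx : ∀ T : Finset (Fin d → F), (T : Set (Fin d → F)) ⊆ (S : Set (Fin d → F)) →
      T.card ≤ 3 → x ∉ Submodule.span F (T : Set (Fin d → F))) :
    kTermLI F 4 (insert x (S : Set (Fin d → F))) := by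
  classical
  intro T hT hTc
  by_cases hxT : x ∈ T
  · have hT' : ((T.erase x : Finset (Fin d → F)) : Set (Fin d → F)) ⊆ (S : Set (Fin d → F)) := by
      intro y hy
      simp only [Finset.coe_erase, Set.mem_diff, Set.mem_singleton_iff, Finset.mem_coe] at hy
      have := hT hy.1
      simp only [Set.mem_insert_iff, Finset.mem_coe] at this
      rcases this with h | h
      · exact absurd h hy.2
      · exact h
    have hc' : (T.erase x).card ≤ 3 := by
      have := Finset.card_erase_of_mem hxT; omega
    have hli := hS _ hT' (hc'.trans (by norm_num))
    have hxs := hx _ hT' hc'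
    have hres := LinearIndepOn.id_insert hli hxs
    have hset : (T : Set (Fin d → F)) = insert x ((T.erase x : Finset (Fin d → F)) : Set (Fin d → F)) := by
      rw [← Finset.coe_insert, Finset.insert_erase hxT]
    rw [hset]
    exact hres
  · apply hS T _ hTc
    intro y hy
    have := hT hy
    simp only [Set.mem_insert_iff, Finset.mem_coe] at this
    rcases this with h | h
    · exact absurd (h ▸ Finset.mem_coe.mp hy) hxT
    · exact h

lemma grow {q d : ℕ} {F : Type*} [Field F] [Fintype F] (hF : Fintype.card F = q)
    (S : Finset (Fin d → F)) (hS : kTermLI F 4 (S : Set (Fin d → F)))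
    (hcard : 1 + S.card ^ 3 * q ^ 3 < q ^ d) :
    ∃ x ∉ S, kTermLI F 4 (insert x (S : Set (Fin d → F))) := by
  classical
  set Bad : Finset (Fin d → F) :=
    insert 0 ((Finset.univ : Finset ((Fin 3 → {a // a ∈ S}) × (Fin 3 → F))).image
      fun p => ∑ i, p.2 i • (p.1 i : Fin d → F)) with hBad
  have hcardF : Fintype.card (Fin d → F) = q ^ d := by
    simp [Fintype.card_fun, hF]
  have hBc : Bad.card < Fintype.card (Fin d → F) := by
    have h1 : Bad.card ≤ 1 + S.card ^ 3 * q ^ 3 := by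
      rw [hBad]
      refine (Finset.card_insert_le _ _).trans ?_
      have := Finset.card_image_le (s := (Finset.univ : Finset ((Fin 3 → {a // a ∈ S}) × (Fin 3 → F))))
        (f := fun p => ∑ i, p.2 i • (p.1 i : Fin d → F))
      have hu : (Finset.univ : Finset ((Fin 3 → {a // a ∈ S}) × (Fin 3 → F))).card
          = S.card ^ 3 * q ^ 3 := by
        simp [Fintype.card_fun, hF, Fintype.card_coe]
      omega
    omega
  obtain ⟨x, hxB⟩ : ∃ x, x ∉ Bad := by
    have : (Badᶜ : Finset (Fin d → F)).Nonempty := by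
      rw [← Finset.card_pos, Finset.card_compl]
      omega
    obtain ⟨x, hx⟩ := this
    exact ⟨x, Finset.mem_compl.mp hx⟩
  have hxspan : ∀ T : Finset (Fin d → F), (T : Set (Fin d → F)) ⊆ (S : Set (Fin d → F)) →
      T.card ≤ 3 → x ∉ Submodule.span F (T : Set (Fin d → F)) := by
    intro T hTS hTc hmem
    apply hxB
    rcases T.eq_empty_or_nonempty with rfl | ⟨t0, ht0⟩
    · simp only [Finset.coe_empty, Submodule.span_empty, Submodule.mem_bot] at hmem
      simp [hBad, hmem]
    · have ht0S : t0 ∈ S := hTS ht0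
      set v : Fin 3 → (Fin d → F) := fun i =>
        if h : (i : ℕ) < T.toList.length then T.toList.get ⟨i, h⟩ else t0 with hv
      have hvT : ∀ i, v i ∈ T := by
        intro i; rw [hv]; dsimp only; split
        · exact Finset.mem_toList.mp (List.get_mem _ _)
        · exact ht0
      have hTv : (T : Set (Fin d → F)) ⊆ Set.range v := by
        intro a ha
        obtain ⟨j, hj⟩ := List.mem_iff_get.mp (Finset.mem_toList.mpr ha)
        have hj3 : (j : ℕ) < 3 := lt_of_lt_of_le j.2 (by rwa [Finset.length_toList])
        refine ⟨⟨j, hj3⟩, ?_⟩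
        rw [hv]; dsimp only
        rw [dif_pos]
        · exact hj
      have hx' : x ∈ Submodule.span F (Set.range v) :=
        Submodule.span_mono hTv hmem
      obtain ⟨c, hc⟩ := (Submodule.mem_span_range_iff_exists_fun F).mp hx'
      rw [hBad]
      apply Finset.mem_insert_of_mem
      refine Finset.mem_image.mpr ⟨⟨fun i => ⟨v i, hTS (hvT i)⟩, c⟩, Finset.mem_univ _, ?_⟩
      simpa using hc
  have hxS : x ∉ S := by
    intro hxS
    have := hxspan {x} (by simpa using hxS) (by simp)
    exact this (by simpa using Submodule.mem_span_singleton_self (R := F) x)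
  exact ⟨x, hxS, kTermLI_insert hS hxspan⟩

lemma pow_bounds (q n d : ℕ) (hq : 2 ≤ q) (hn : 1 ≤ n)
    (hd : d = ⌈3 * Real.log n / Real.log q + 3⌉₊) :
    n ^ 3 * q ^ 3 ≤ q ^ d ∧ q ^ d ≤ q ^ 4 * n ^ 3 := by
  have hq0 : (0:ℝ) < (q:ℝ) := by positivity
  have hq1 : (1:ℝ) < (q:ℝ) := by exact_mod_cast hq.trans_lt' one_lt_two
  have hlq : 0 < Real.log q := Real.log_pos hq1
  have hn0 : (0:ℝ) < (n:ℝ) := by exact_mod_cast hn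
  have hln : 0 ≤ Real.log n := Real.log_nonneg (by exact_mod_cast hn)
  set L : ℝ := 3 * Real.log n / Real.log q + 3 with hL
  have hL0 : 0 ≤ L := by positivity
  have hd1 : L ≤ (d:ℝ) := by rw [hd]; exact Nat.le_ceil L
  have hd2 : (d:ℝ) ≤ L + 1 := by rw [hd]; exact le_of_lt (Nat.ceil_lt_add_one hL0)
  have hlogb : 3 * Real.log n / Real.log q = Real.logb q ((n:ℝ) ^ 3) := by
    rw [Real.logb, Real.log_pow]; push_cast; ring
  have hqL : (q:ℝ) ^ L = (n:ℝ) ^ 3 * (q:ℝ) ^ (3:ℕ) := by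
    rw [hL, hlogb, Real.rpow_add hq0, Real.rpow_logb hq0 (ne_of_gt hq1) (by positivity)]
    rw [show (3:ℝ) = ((3:ℕ):ℝ) by norm_num, Real.rpow_natCast]
  constructor
  · have h1 : (q:ℝ) ^ L ≤ (q:ℝ) ^ ((d:ℕ):ℝ) :=
      Real.rpow_le_rpow_of_exponent_le (le_of_lt hq1) hd1
    rw [hqL, Real.rpow_natCast] at h1
    exact_mod_cast h1
  · have h1 : (q:ℝ) ^ ((d:ℕ):ℝ) ≤ (q:ℝ) ^ (L + 1) :=
      Real.rpow_le_rpow_of_exponent_le (le_of_lt hq1) hd2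
    have h2 : (q:ℝ) ^ (L + 1) = (q:ℝ) ^ (4:ℕ) * (n:ℝ) ^ 3 := by
      rw [Real.rpow_add hq0, hqL, Real.rpow_one]
      ring
    rw [Real.rpow_natCast, h2] at h1
    exact_mod_cast h1

lemma inj2' {α : Type*} {u w : α} (h : u ≠ w) : Function.Injective ![u, w] := by
  intro i j hij; fin_cases i <;> fin_cases j <;> simp_all

lemma inj3' {α : Type*} {u w z : α} (h1 : u ≠ w) (h2 : u ≠ z) (h3 : w ≠ z) :
    Function.Injective ![u, w, z] := by
  intro i j hij; fin_cases i <;> fin_cases j <;> simp_all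

lemma inj4' {α : Type*} {u w z t : α} (h1 : u ≠ w) (h2 : u ≠ z) (h3 : u ≠ t)
    (h4 : w ≠ z) (h5 : w ≠ t) (h6 : z ≠ t) : Function.Injective ![u, w, z, t] := by
  intro i j hij; fin_cases i <;> fin_cases j <;> simp_all

lemma li2' {F : Type*} [Field F] {d : ℕ} {S : Set (Fin d → F)} (hS : kTermLI F 4 S)
    {u w : Fin d → F} (hu : u ∈ S) (hw : w ∈ S) (huw : u ≠ w)
    (c e : F) (hce : c • u + e • w = 0) : c = 0 ∧ e = 0 := by
  have hli := tuple_li hS (by norm_num) ![u, w] (inj2' huw)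
    (by intro i; fin_cases i <;> simp [hu, hw])
  have hz := Fintype.linearIndependent_iff.mp hli ![c, e]
    (by simpa [Fin.sum_univ_two] using hce)
  exact ⟨by simpa using hz 0, by simpa using hz 1⟩

lemma li3' {F : Type*} [Field F] {d : ℕ} {S : Set (Fin d → F)} (hS : kTermLI F 4 S)
    {u w z : Fin d → F} (hu : u ∈ S) (hw : w ∈ S) (hzS : z ∈ S)
    (huw : u ≠ w) (huz : u ≠ z) (hwz : w ≠ z)
    (c e f : F) (hce : c • u + e • w + f • z = 0) : c = 0 ∧ e = 0 ∧ f = 0 := by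
  have hli := tuple_li hS (by norm_num) ![u, w, z] (inj3' huw huz hwz)
    (by intro i; fin_cases i <;> simp [hu, hw, hzS])
  have hz := Fintype.linearIndependent_iff.mp hli ![c, e, f]
    (by simpa [Fin.sum_univ_three] using hce)
  exact ⟨by simpa using hz 0, by simpa using hz 1, by simpa using hz 2⟩

lemma li4' {F : Type*} [Field F] {d : ℕ} {S : Set (Fin d → F)} (hS : kTermLI F 4 S)
    {u w z t : Fin d → F} (hu : u ∈ S) (hw : w ∈ S) (hzS : z ∈ S) (htS : t ∈ S)
    (huw : u ≠ w) (huz : u ≠ z) (hut : u ≠ t) (hwz : w ≠ z) (hwt : w ≠ t) (hzt : z ≠ t)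
    (c e f g : F) (hce : c • u + e • w + f • z + g • t = 0) :
    c = 0 ∧ e = 0 ∧ f = 0 ∧ g = 0 := by
  have hli := tuple_li hS (by norm_num) ![u, w, z, t] (inj4' huw huz hut hwz hwt hzt)
    (by intro i; fin_cases i <;> simp [hu, hw, hzS, htS])
  have hz := Fintype.linearIndependent_iff.mp hli ![c, e, f, g]
    (by simpa [Fin.sum_univ_four] using hce)
  exact ⟨by simpa using hz 0, by simpa using hz 1, by simpa using hz 2, by simpa using hz 3⟩

lemma sidon_of_kTermLI {F : Type*} [Field F] {d : ℕ} {S : Set (Fin d → F)}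
    (hS : kTermLI F 4 S) :
    ∀ a b : F, a ≠ 0 → b ≠ 0 → ∀ x y x' y' : Fin d → F,
    x ∈ S → y ∈ S → x' ∈ S → y' ∈ S → x ≠ y → x' ≠ y' →
    a • x + b • y = a • x' + b • y' → ({x, y} : Set (Fin d → F)) = {x', y'} := by
  intro a b ha hb x y x' y' hx hy hx' hy' hxy hx'y' heq
  by_cases h1 : x = x'
  · subst h1
    have hyy : y = y' := by
      have h0 : b • (y - y') = 0 := by
        rw [smul_sub, sub_eq_zero]; exact add_left_cancel heq
      have := congrArg (fun v => b⁻¹ • v) h0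
      simpa [inv_smul_smul₀ hb, sub_eq_zero] using this
    rw [hyy]
  · by_cases h2 : x = y'
    · subst h2
      by_cases h3 : y = x'
      · subst h3; exact Set.pair_comm x y
      · exfalso
        have h0 : (a - b) • x + b • y + (-a) • x' = 0 := by
          have hrw : (a - b) • x + b • y + (-a) • x' = (a • x + b • y) - (a • x' + b • x) := by
            module
          rw [hrw, heq, sub_self]
        obtain ⟨c1, c2, c3⟩ := li3' hS hx hy hx' hxy h1 h3 _ _ _ h0
        exact ha (neg_eq_zero.mp c3)
    · by_cases h3 : y = x'
      · subst h3
        exfalso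
        have hyy' : y ≠ y' := hx'y'
        have h0 : a • x + (b - a) • y + (-b) • y' = 0 := by
          have hrw : a • x + (b - a) • y + (-b) • y' = (a • x + b • y) - (a • y + b • y') := by
            module
          rw [hrw, heq, sub_self]
        obtain ⟨c1, c2, c3⟩ := li3' hS hx hy hy' hxy h2 hyy' _ _ _ h0
        exact ha c1
      · by_cases h4 : y = y'
        · subst h4
          exfalso
          have h0 : a • x + (-a) • x' = 0 := by
            have hrw : a • x + (-a) • x' = (a • x + b • y) - (a • x' + b • y) := by module
            rw [hrw, heq, sub_self]
          obtain ⟨c1, c2⟩ := li2' hS hx hx' h1 _ _ h0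
          exact ha c1
        · exfalso
          have h0 : a • x + b • y + (-a) • x' + (-b) • y' = 0 := by
            have hrw : a • x + b • y + (-a) • x' + (-b) • y' =
                (a • x + b • y) - (a • x' + b • y') := by module
            rw [hrw, heq, sub_self]
          obtain ⟨c1, c2, c3, c4⟩ := li4' hS hx hy hx' hy' hxy h1 h2 h3 h4 hx'y' _ _ _ _ h0
          exact ha c1

theorem stmt4 (q : ℕ) (hq : IsPrimePow q) (F : Type*) [Field F] [Fintype F]
    (hF : Fintype.card F = q) (n : ℕ) (hn : 1 ≤ n) (d : ℕ)
    (hd : d = ⌈3 * Real.log n / Real.log q + 3⌉₊) :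
    ∃ S : Finset (Fin d → F), S.card = n ∧ kTermLI F 4 (S : Set (Fin d → F)) ∧
      LinearSidon F (S : Set (Fin d → F)) ∧
      Fintype.card (Fin d → F) ≤ q ^ 4 * n ^ 3 := by
  classical
  have hq2 : 2 ≤ q := hq.two_le
  obtain ⟨hb1, hb2⟩ := pow_bounds q n d hq2 hn hd
  have hcardF : Fintype.card (Fin d → F) = q ^ d := by simp [Fintype.card_fun, hF]
  have key : ∀ m : ℕ, m ≤ n → ∃ S : Finset (Fin d → F), S.card = m ∧
      kTermLI F 4 (S : Set (Fin d → F)) := by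
    intro m
    induction m with
    | zero =>
      intro _
      refine ⟨∅, Finset.card_empty, ?_⟩
      intro T hT _
      have hTe : T = ∅ := by
        rw [← Finset.coe_eq_empty, ← Set.subset_empty_iff]
        simpa using hT
      subst hTe
      rw [Finset.coe_empty]
      exact linearIndependent_empty F _
    | succ m ih =>
      intro hm
      obtain ⟨S, hSc, hSli⟩ := ih (Nat.le_of_succ_le hm)
      have hq3 : 8 ≤ q ^ 3 := by
        calc (8:ℕ) = 2 ^ 3 := rfl
        _ ≤ q ^ 3 := Nat.pow_le_pow_left hq2 3
      have hmn : m ≤ n - 1 := by omega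
      have hlt : 1 + S.card ^ 3 * q ^ 3 < q ^ d := by
        have h1 : S.card ^ 3 ≤ (n - 1) ^ 3 := Nat.pow_le_pow_left (hSc ▸ hmn) 3
        have h2 : (n - 1) ^ 3 + 1 ≤ n ^ 3 := by
          obtain ⟨k, rfl⟩ : ∃ k, n = k + 1 := ⟨n - 1, by omega⟩
          simp only [Nat.add_sub_cancel]
          nlinarith
        nlinarith [Nat.mul_le_mul_right (q ^ 3) h1, Nat.mul_le_mul_right (q ^ 3) h2, hq3, hb1]
      obtain ⟨x, hxS, hli⟩ := grow hF S hSli hlt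
      refine ⟨insert x S, ?_, ?_⟩
      · rw [Finset.card_insert_of_notMem hxS, hSc]
      · rw [Finset.coe_insert]
        exact hli
  obtain ⟨S, hSc, hSli⟩ := key n le_rfl
  refine ⟨S, hSc, hSli, sidon_of_kTermLI hSli, ?_⟩
  rw [hcardF]
  exact hb2
end

section
/- Let q be a prime power, t ≥ 1, n ≥ 1, and set d = ⌈(2t−1)·log n / log q + (2t−1)⌉. Then there exists a t-term linearly independent set S ⊆ (F_q)^d with |S| = n. -/
open Finset Submodule in
lemma greedy_aux {F : Type*} [Field F] [Fintype F] {d t n : ℕ} (ht : 1 ≤ t) (hn : 1 ≤ n)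
    (hbig : n + n ^ (t - 1) * Fintype.card F ^ (t - 1) ≤ Fintype.card F ^ d) :
    ∀ m, m ≤ n → ∃ S : Finset (Fin d → F), S.card = m ∧ kTermLI F t (S : Set (Fin d → F)) := by
  classical
  intro m
  induction m with
  | zero =>
    intro _
    refine ⟨∅, rfl, fun T hT _ => ?_⟩
    have hT0 : T = ∅ := by simpa using hT
    subst hT0
    have hcoe : ((∅ : Finset (Fin d → F)) : Set (Fin d → F)) = (∅ : Set (Fin d → F)) :=
      Finset.coe_empty
    rw [hcoe]
    exact linearIndependent_empty_type
  | succ m ih =>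
    intro hm
    obtain ⟨S, hScard, hSLI⟩ := ih (Nat.le_of_succ_le hm)
    set k := min (t - 1) m with hk
    -- the "bad" set of vectors to avoid
    let spanF : Finset (Fin d → F) → Finset (Fin d → F) := fun T =>
      (Set.toFinite ((Submodule.span F (T : Set (Fin d → F)) : Submodule F (Fin d → F)) :
        Set (Fin d → F))).toFinset
    let bad : Finset (Fin d → F) := S ∪ (S.powersetCard k).biUnion spanF
    have hq2 : 1 ≤ Fintype.card F := Fintype.card_pos
    -- card of each span
    have hspan : ∀ T : Finset (Fin d → F), T.card = k → (spanF T).card ≤ Fintype.card F ^ (t - 1) := by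
      intro T hT
      haveI hfin : Fintype ↥(Submodule.span F (T : Set (Fin d → F))) := Fintype.ofFinite _
      haveI hfin' : Fintype ↥((Submodule.span F (T : Set (Fin d → F)) :
          Submodule F (Fin d → F)) : Set (Fin d → F)) := Fintype.ofFinite _
      have h1 : (spanF T).card = Nat.card ↥((Submodule.span F (T : Set (Fin d → F)) :
          Submodule F (Fin d → F)) : Set (Fin d → F)) := by
        rw [Set.Finite.card_toFinset]
        exact (Nat.card_eq_fintype_card).symm
      have h2 : Nat.card ↥((Submodule.span F (T : Set (Fin d → F)) :
          Submodule F (Fin d → F)) : Set (Fin d → F))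
          = Nat.card ↥(Submodule.span F (T : Set (Fin d → F))) := rfl
      rw [h1, h2, Nat.card_eq_fintype_card, Module.card_eq_pow_finrank (K := F)]
      apply Nat.pow_le_pow_right hq2
      calc Module.finrank F ↥(Submodule.span F (T : Set (Fin d → F))) ≤ T.card :=
            finrank_span_finset_le_card T
        _ = k := hT
        _ ≤ t - 1 := min_le_left _ _
    -- card of bad
    have hbadcard : bad.card < Fintype.card F ^ d := by
      have h2 : ((S.powersetCard k).biUnion spanF).card ≤ n ^ (t - 1) * Fintype.card F ^ (t - 1) := by
        calc ((S.powersetCard k).biUnion spanF).card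
            ≤ (S.powersetCard k).card * (Fintype.card F ^ (t - 1)) := by
              apply Finset.card_biUnion_le_card_mul
              intro T hT
              exact hspan T (Finset.mem_powersetCard.mp hT).2
          _ ≤ n ^ (t - 1) * Fintype.card F ^ (t - 1) := by
              apply Nat.mul_le_mul_right
              rw [Finset.card_powersetCard, hScard]
              calc m.choose k ≤ m ^ k := Nat.choose_le_pow m k
                _ ≤ n ^ k := Nat.pow_le_pow_left (le_trans (Nat.le_succ m) hm) k
                _ ≤ n ^ (t - 1) := Nat.pow_le_pow_right hn (min_le_left _ _)
      calc bad.card ≤ S.card + ((S.powersetCard k).biUnion spanF).card := Finset.card_union_le _ _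
        _ ≤ m + n ^ (t - 1) * Fintype.card F ^ (t - 1) := by omega
        _ < n + n ^ (t - 1) * Fintype.card F ^ (t - 1) := by omega
        _ ≤ Fintype.card F ^ d := hbig
    -- pick v outside bad
    obtain ⟨v, hv⟩ : ∃ v, v ∉ bad := by
      by_contra h
      push_neg at h
      have huniv : bad = Finset.univ := Finset.eq_univ_iff_forall.mpr h
      have hcard : Fintype.card (Fin d → F) = Fintype.card F ^ d := by
        simp [Fintype.card_pi]
      rw [huniv, Finset.card_univ, hcard] at hbadcard
      exact absurd hbadcard (lt_irrefl _)
    have hvS : v ∉ S := fun h => hv (Finset.mem_union_left _ h)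
    have hvspan : ∀ T : Finset (Fin d → F), ↑T ⊆ (S : Set (Fin d → F)) → T.card ≤ t - 1 →
        v ∉ Submodule.span F (T : Set (Fin d → F)) := by
      intro T hTS hTc hvT
      have hTS' : T ⊆ S := Finset.coe_subset.mp hTS
      have hTk : T.card ≤ k := le_min hTc (le_trans (Finset.card_le_card hTS') hScard.le)
      obtain ⟨U, hTU, hUS, hUk⟩ := Finset.exists_subsuperset_card_eq hTS' hTk
        (by rw [hScard]; exact min_le_right _ _)
      have hvU : v ∈ Submodule.span F (U : Set (Fin d → F)) :=
        Submodule.span_mono (Finset.coe_subset.mpr hTU) hvT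
      apply hv
      apply Finset.mem_union_right
      exact Finset.mem_biUnion.mpr ⟨U, Finset.mem_powersetCard.mpr ⟨hUS, hUk⟩,
        (Set.Finite.mem_toFinset _).mpr hvU⟩
    refine ⟨insert v S, by rw [Finset.card_insert_of_notMem hvS, hScard], ?_⟩
    intro T hTsub hTcard
    by_cases hvT : v ∈ T
    · have hT'S : (↑(T.erase v) : Set (Fin d → F)) ⊆ S := by
        intro x hx
        simp only [Finset.coe_erase, Set.mem_diff, Finset.mem_coe,
          Set.mem_singleton_iff] at hx
        have := hTsub hx.1
        simp only [Finset.coe_insert, Set.mem_insert_iff] at this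
        rcases this with h | h
        · exact absurd h hx.2
        · exact h
      have hT'c : (T.erase v).card ≤ t - 1 := by
        rw [Finset.card_erase_of_mem hvT]; omega
      have hvT' : v ∉ (↑(T.erase v) : Set (Fin d → F)) := by simp
      have hTeq : (T : Set (Fin d → F)) = insert v (↑(T.erase v) : Set (Fin d → F)) := by
        rw [← Finset.coe_insert, Finset.insert_erase hvT]
      rw [hTeq]; refine (linearIndepOn_id_insert hvT').mpr ?_
      exact ⟨hSLI (T.erase v) hT'S (by omega), hvspan (T.erase v) hT'S hT'c⟩
    · have hTSS : (T : Set (Fin d → F)) ⊆ S := by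
        intro x hx
        have := hTsub hx
        simp only [Finset.coe_insert, Set.mem_insert_iff] at this
        rcases this with h | h
        · exact absurd (h ▸ hx) (by simpa [h] using hvT)
        · exact h
      exact hSLI T hTSS hTcard

theorem stmt5 (q : ℕ) (hq : IsPrimePow q) (F : Type*) [Field F] [Fintype F]
    (hF : Fintype.card F = q) (t n : ℕ) (ht : 1 ≤ t) (hn : 1 ≤ n) (d : ℕ)
    (hd : d = ⌈(2 * t - 1 : ℕ) * Real.log n / Real.log q + (2 * t - 1 : ℕ)⌉₊) :
    ∃ S : Finset (Fin d → F), S.card = n ∧ kTermLI F t (S : Set (Fin d → F)) := by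
  have hq2 : 2 ≤ q := hq.two_le
  have hn0 : (0 : ℝ) < n := by exact_mod_cast hn
  have hq0 : (0 : ℝ) < q := by positivity
  have hq1 : (1 : ℝ) < q := by exact_mod_cast hq2
  have hlogq : 0 < Real.log q := Real.log_pos hq1
  -- real bound: (n*q)^(2t-1) ≤ q^d
  have hnq : ((n * q : ℕ) : ℝ) ^ (2 * t - 1) ≤ ((q : ℕ) : ℝ) ^ d := by
    have hx : ((2 * t - 1 : ℕ) * Real.log n / Real.log q + (2 * t - 1 : ℕ) : ℝ) ≤ d := by
      rw [hd]; exact Nat.le_ceil _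
    have key : ((2 * t - 1 : ℕ) : ℝ) * (Real.log n + Real.log q) ≤ (d : ℝ) * Real.log q := by
      have h1 : ((2 * t - 1 : ℕ) : ℝ) * Real.log n / Real.log q * Real.log q
          = ((2 * t - 1 : ℕ) : ℝ) * Real.log n := by field_simp
      nlinarith [mul_le_mul_of_nonneg_right hx (le_of_lt hlogq)]
    rw [← Real.log_le_log_iff (by positivity) (by positivity), Real.log_pow, Real.log_pow]
    push_cast
    rw [Real.log_mul (ne_of_gt hn0) (ne_of_gt hq0)]
    exact_mod_cast key
  have hnq' : (n * q) ^ (2 * t - 1) ≤ q ^ d := by exact_mod_cast hnq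
  -- natural number bound
  have harith : n + n ^ (t - 1) * q ^ (t - 1) ≤ (n * q) ^ (2 * t - 1) := by
    have h2t : 2 * t - 1 = t + (t - 1) := by omega
    rw [h2t, pow_add, mul_pow, mul_pow]
    have hA : 2 * n ≤ n ^ t * q ^ t := by
      calc 2 * n = n * 2 := by ring
        _ ≤ n ^ t * q ^ t := Nat.mul_le_mul (Nat.le_self_pow (by omega) n)
            (le_trans hq2 (Nat.le_self_pow (by omega) q))
    have hB : 0 < n ^ (t - 1) * q ^ (t - 1) :=
      Nat.mul_pos (pow_pos (by omega) _) (pow_pos (by omega) _)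
    have hAB : 2 * n * (n ^ (t - 1) * q ^ (t - 1))
        ≤ (n ^ t * q ^ t) * (n ^ (t - 1) * q ^ (t - 1)) := Nat.mul_le_mul_right _ hA
    have h3 : n ≤ n * (n ^ (t - 1) * q ^ (t - 1)) := Nat.le_mul_of_pos_right _ hB
    have h4 : n ^ (t - 1) * q ^ (t - 1) ≤ n * (n ^ (t - 1) * q ^ (t - 1)) :=
      Nat.le_mul_of_pos_left _ (by omega)
    nlinarith [hAB, h3, h4]
  have hbig : n + n ^ (t - 1) * Fintype.card F ^ (t - 1) ≤ Fintype.card F ^ d := by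
    rw [hF]; omega
  exact greedy_aux ht hn hbig n le_rfl
end

section
/- Let q ≥ 2 be a prime power and k ≥ 1. Let R ⊆ F_q^k and suppose that for every r ∈ R there exists an index i_r ∈ [k] such that for all r' ∈ F_q^k with Hamming(r, r') ≤ 2 and with coordinate i_r among the differing coordinates, r' ∉ R. Then each point of F_q^k \ R lies in at most one set T_{r'} = {r' + a·e_{i_{r'}} : a ∈ F_q^*} for r' ∈ R, and consequently |R| ≤ q^{k−1}. -/
/-- The set of coordinates on which two vectors differ. -/
def diffSet {k : ℕ} {F : Type*} (u v : Fin k → F) : Set (Fin k) := {l | u l ≠ v l}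

theorem stmt11 (F : Type*) [Field F] [Fintype F] (q k : ℕ)
    (hF : Fintype.card F = q) (hq : IsPrimePow q) (hq2 : 2 ≤ q) (hk : 1 ≤ k)
    (R : Set (Fin k → F)) (ir : (Fin k → F) → Fin k)
    (hblock : ∀ r ∈ R, ∀ r' : Fin k → F,
      (diffSet r r').ncard ≤ 2 → ir r ∈ diffSet r r' → r' ∉ R)
    (T : (Fin k → F) → Set (Fin k → F))
    (hT : ∀ r, T r = {s | ∃ a : F, a ≠ 0 ∧ s = r + a • (Pi.single (ir r) 1 : Fin k → F)}) :
    (∀ s : Fin k → F, s ∉ R → ({r' ∈ R | s ∈ T r'} : Set (Fin k → F)).ncard ≤ 1) ∧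
      R.ncard ≤ q ^ (k - 1) := by
  classical
  -- every point of T r is outside R
  have key : ∀ r ∈ R, ∀ a : F, a ≠ 0 →
      r + a • (Pi.single (ir r) 1 : Fin k → F) ∉ R := by
    intro r hr a ha
    have hdiff : diffSet r (r + a • (Pi.single (ir r) 1 : Fin k → F)) = {ir r} := by
      ext l
      by_cases h : l = ir r <;>
        simp [diffSet, h, ha, Pi.single_apply]
    refine hblock r hr _ ?_ ?_
    · rw [hdiff]; simp
    · rw [hdiff]; simp
  -- uniqueness of the line through a point outside R
  have uniq : ∀ s ∉ R, ∀ r1 ∈ R, ∀ r2 ∈ R, s ∈ T r1 → s ∈ T r2 → r1 = r2 := by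
    intro s hs r1 hr1 r2 hr2 h1 h2
    rw [hT r1] at h1
    rw [hT r2] at h2
    obtain ⟨a, ha, hsa⟩ := h1
    obtain ⟨b, hb, hsb⟩ := h2
    by_contra hne
    by_cases hii : ir r1 = ir r2
    · -- same direction
      have hout : ∀ l, l ≠ ir r1 → r1 l = r2 l := by
        intro l hl
        have e1 : s l = r1 l := by
          rw [hsa]; simp [Pi.single_apply, hl]
        have e2 : s l = r2 l := by
          rw [hsb]; simp [Pi.single_apply, ← hii, hl]
        rw [← e1, ← e2]
      have hi : ir r1 ∈ diffSet r1 r2 := by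
        by_contra hcon
        apply hne
        funext l
        by_cases hl : l = ir r1
        · subst hl; simpa [diffSet] using hcon
        · exact hout l hl
      have hsub : diffSet r1 r2 ⊆ {ir r1} := by
        intro l hl
        by_contra hlc
        exact hl (hout l (by simpa using hlc))
      refine hblock r1 hr1 r2 ?_ hi hr2
      calc (diffSet r1 r2).ncard ≤ ({ir r1} : Set (Fin k)).ncard :=
            Set.ncard_le_ncard hsub (Set.finite_singleton _)
        _ ≤ 2 := by simp
    · -- different directions
      have hi : ir r1 ∈ diffSet r1 r2 := by
        have e1 : s (ir r1) = r1 (ir r1) + a := by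
          rw [hsa]; simp
        have e2 : s (ir r1) = r2 (ir r1) := by
          rw [hsb]; simp [Pi.single_apply, hii]
        simp only [diffSet, Set.mem_setOf_eq]
        intro h
        apply ha
        have := e1.symm.trans e2
        rw [h] at this
        simpa using this
      have hsub : diffSet r1 r2 ⊆ {ir r1, ir r2} := by
        intro l hl
        by_contra hlc
        simp only [Set.mem_insert_iff, Set.mem_singleton_iff, not_or] at hlc
        apply hl
        have e1 : s l = r1 l := by
          rw [hsa]; simp [Pi.single_apply, hlc.1]
        have e2 : s l = r2 l := by
          rw [hsb]; simp [Pi.single_apply, hlc.2]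
        rw [← e1, ← e2]
      refine hblock r1 hr1 r2 ?_ hi hr2
      calc (diffSet r1 r2).ncard ≤ ({ir r1, ir r2} : Set (Fin k)).ncard :=
            Set.ncard_le_ncard hsub (Set.toFinite _)
        _ ≤ 2 := by
            apply le_trans (Set.ncard_insert_le _ _)
            simp
  constructor
  · intro s hs
    rw [Set.ncard_le_one_iff (Set.toFinite _)]
    rintro a b ⟨haR, haT⟩ ⟨hbR, hbT⟩
    exact uniq s hs a haR b hbR haT hbT
  · -- counting
    set f : R × F → (Fin k → F) :=
      fun p => (p.1 : Fin k → F) + p.2 • (Pi.single (ir p.1) 1 : Fin k → F) with hf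
    have hinj : Function.Injective f := by
      rintro ⟨⟨r1, hr1⟩, a⟩ ⟨⟨r2, hr2⟩, b⟩ heq
      simp only [hf] at heq
      by_cases ha : a = 0
      · by_cases hb : b = 0
        · subst ha; subst hb
          simp only [zero_smul, add_zero] at heq
          simp [heq]
        · exfalso
          subst ha
          simp only [zero_smul, add_zero] at heq
          exact key r2 hr2 b hb (heq ▸ hr1)
      · by_cases hb : b = 0
        · exfalso
          subst hb
          simp only [zero_smul, add_zero] at heq
          exact key r1 hr1 a ha (heq.symm ▸ hr2)
        · have hsR : r1 + a • (Pi.single (ir r1) 1 : Fin k → F) ∉ R := key r1 hr1 a ha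
          have hT1 : r1 + a • (Pi.single (ir r1) 1 : Fin k → F) ∈ T r1 := by
            rw [hT]; exact ⟨a, ha, rfl⟩
          have hT2 : r1 + a • (Pi.single (ir r1) 1 : Fin k → F) ∈ T r2 := by
            rw [hT]; exact ⟨b, hb, heq⟩
          have hr12 : r1 = r2 := uniq _ hsR r1 hr1 r2 hr2 hT1 hT2
          subst hr12
          have : a = b := by
            have := congrFun heq (ir r1)
            simp at this
            exact this
          simp [this]
    have hcard : Nat.card (R × F) ≤ Nat.card (Fin k → F) :=
      Nat.card_le_card_of_injective f hinj
    rw [Nat.card_prod, Nat.card_eq_fintype_card (α := F), hF,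
      Nat.card_coe_set_eq, Nat.card_eq_fintype_card] at hcard
    have hpow : Fintype.card (Fin k → F) = q ^ k := by
      simp [hF]
    rw [hpow] at hcard
    have hq0 : 0 < q := by omega
    have hk' : q ^ k = q ^ (k - 1) * q := by
      rw [← pow_succ]
      congr 1
      omega
    rw [hk'] at hcard
    exact Nat.le_of_mul_le_mul_right hcard hq0
end
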